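/- arXiv:1411.3711 — 12 statements merged into one kernel-verified Lean document; each statement's English description precedes it below -/
import Mathlib

section
/- Let i and k be coprime integers with i > 1 and k > 1, and set p = i·k + 1. For every integer m with 0 < m < k, if n is the unique integer with 0 ≤ n < p and −m·i² ≡ n (mod p), then i ≤ n. -/
/-- Let `i` and `k` be coprime integers with `i > 1` and `k > 1`, and set `p = i*k + 1`.
For every integer `m` with `0 < m < k`, if `n` satisfies `0 ≤ n < p` and
`-m*i² ≡ n (mod p)`, then `i ≤ n`. -/
theorem stmt_0 (i k p m n : ℤ) (hcop : IsCoprime i k) (hi : 1 < i) (hk : 1 < k)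
    (hp : p = i * k + 1) (hm0 : 0 < m) (hmk : m < k) (hn0 : 0 ≤ n) (hnp : n < p)
    (hcong : -m * i ^ 2 ≡ n [ZMOD p]) : i ≤ n := by
  have hk0 : (0:ℤ) < k := by linarith
  obtain ⟨a, b, hab, hb0, hbk⟩ : ∃ a b : ℤ, m * i = k * a + b ∧ 0 ≤ b ∧ b < k :=
    ⟨(m*i)/k, (m*i)%k, (Int.mul_ediv_add_emod _ _).symm, Int.emod_nonneg _ (by linarith),
      Int.emod_lt_of_pos _ hk0⟩
  have hbne : b ≠ 0 := by
    intro h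
    have hdvd : k ∣ m * i := ⟨a, by omega⟩
    have hkm : k ∣ m := hcop.symm.dvd_of_dvd_mul_right hdvd
    have := Int.le_of_dvd hm0 hkm
    omega
  have ha0 : 0 ≤ a := by nlinarith
  have hai : a < i := by nlinarith
  have h1 : p ∣ (-m * i ^ 2) - (p - (b * i - a)) := ⟨-(a+1), by subst hp; linear_combination (-i) * hab⟩
  have h2 : p ∣ n - (-m * i ^ 2) := hcong.dvd
  have key : p ∣ n - (p - (b * i - a)) := by
    have heq : n - (p - (b * i - a)) = (n - -m * i ^ 2) + (-m * i ^ 2 - (p - (b * i - a))) := by ring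
    rw [heq]; exact dvd_add h2 h1
  obtain ⟨c, hc⟩ := key
  have hb1 : 1 ≤ b := by omega
  have hbi1 : 0 < b * i - a := by nlinarith [mul_le_mul_of_nonneg_right hb1 (by linarith : (0:ℤ) ≤ i)]
  have hbi2 : b * i - a < p := by nlinarith
  have hc0 : c = 0 := by
    rcases lt_trichotomy c 0 with h | h | h
    · nlinarith
    · exact h
    · nlinarith
  have hn : n = p - (b * i - a) := by
    rw [hc0, mul_zero] at hc; linarith
  nlinarith [mul_le_mul_of_nonneg_left (show b + 1 ≤ k by omega) (le_of_lt (by linarith : (0:ℤ) < i))]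
end

section
/- Let a and p be integers with 0 < a < p. Then there exist integers r, s with gcd(r,s) = 1, p = r² + r·s + s², and a·s² ≡ r² (mod p), if and only if a² + a + 1 ≡ 0 (mod p). -/
-- Descent lemma: any positive divisor p of c²+c+1 is properly represented,
-- with the ratio condition r ≡ c·s (mod p).
lemma key_aux : ∀ n : ℕ, ∀ p : ℤ, p.natAbs ≤ n → 0 < p → ∀ c : ℤ, p ∣ c ^ 2 + c + 1 →
    ∃ r s : ℤ, IsCoprime r s ∧ p = r ^ 2 + r * s + s ^ 2 ∧ r ≡ c * s [ZMOD p] := by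
  intro n
  induction n with
  | zero => intro p hpn hp c _; exfalso; omega
  | succ n ih =>
    intro p hpn hp c hc
    rcases eq_or_lt_of_le (by linarith : (1:ℤ) ≤ p) with h1 | h2
    · refine ⟨1, 0, isCoprime_one_left, by rw [← h1]; ring, ?_⟩
      exact Int.modEq_iff_dvd.mpr (by rw [← h1]; exact one_dvd _)
    · -- p ≥ 2
      obtain ⟨c', hdc, hb1, hb2⟩ : ∃ c', p ∣ c - c' ∧ -p ≤ 2*c' ∧ 2*c' ≤ p := by
        have h0 : 0 ≤ c % p := Int.emod_nonneg c hp.ne'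
        have h1 : c % p < p := Int.emod_lt_of_pos c hp
        have hd0 : p ∣ c - c % p := Int.dvd_self_sub_of_emod_eq rfl
        refine ⟨if 2*(c % p) ≤ p then c % p else c % p - p, ?_, ?_, ?_⟩
        · split_ifs with h
          · exact hd0
          · have he : c - (c % p - p) = (c - c % p) + p := by ring
            rw [he]; exact dvd_add hd0 dvd_rfl
        · split_ifs with h <;> omega
        · split_ifs with h <;> omega
      have hc'dvd : p ∣ c'^2 + c' + 1 := by
        obtain ⟨k, hk⟩ := hdc
        have he : c'^2 + c' + 1 = (c^2 + c + 1) - (p*k) * (c + c' + 1) := by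
          linear_combination (-(c + c' + 1)) * hk
        rw [he]
        exact dvd_sub hc ⟨k * (c + c' + 1), by ring⟩
      obtain ⟨q, hq⟩ := hc'dvd
      have hq0 : 0 < q := by
        by_contra hcon
        push_neg at hcon
        nlinarith [sq_nonneg (2*c'+1), mul_nonpos_of_nonneg_of_nonpos hp.le hcon]
      have hqp : q < p := by
        by_contra hcon
        push_neg at hcon
        have h3 : p * p ≤ p * q := mul_le_mul_of_nonneg_left hcon hp.le
        nlinarith [sq_le_sq' hb1 hb2]
      obtain ⟨e, f, hef, hqef, hmode⟩ :=
        ih q (by omega) hq0 c' ⟨p, by linarith [hq]⟩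
      have hqd : q ∣ c' * f - e := Int.ModEq.dvd hmode
      obtain ⟨s, hs⟩ := hqd
      have hra : q ∣ c'*e + c'*f + f := by
        have he : c'*e + c'*f + f = (-c')*(c'*f - e) + f*(c'^2+c'+1) := by ring
        rw [he, hs, hq]
        exact dvd_add ⟨(-c')*s, by ring⟩ ⟨f*p, by ring⟩
      obtain ⟨r, hr⟩ := hra
      have hq0' : q ≠ 0 := hq0.ne'
      have hcop : f * r - (e + f) * s = 1 := by
        have h : q * (f*r - (e+f)*s) = q * 1 := by
          linear_combination (-1)*hqef - f*hr + (e+f)*hs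
        exact mul_left_cancel₀ hq0' h
      have hform : q^2 * (r^2 - r*s + s^2) = q^2 * p := by
        linear_combination q*hq - (c'^2+c'+1)*hqef +
          (-(c'*e+c'*f+f + q*r) + q*s)*hr + ((c'*e+c'*f+f) - ((c'*f-e) + q*s))*hs
      have hform' : p = r^2 - r*s + s^2 :=
        (mul_left_cancel₀ (pow_ne_zero 2 hq0') hform).symm
      have hlin : r + c'*s = f*p := by
        have h : q * (r + c'*s) = q * (f*p) := by
          linear_combination f*hq - hr - c'*hs
        exact mul_left_cancel₀ hq0' h
      refine ⟨r, -s, ⟨f, e+f, by linear_combination hcop⟩, by rw [hform']; ring, ?_⟩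
      rw [Int.modEq_iff_dvd]
      -- goal : p ∣ c * (-s) - r
      obtain ⟨k, hk⟩ := hdc
      refine ⟨-f - k*s, ?_⟩
      linear_combination (-1)*hlin + (-s)*hk

/-- Let `a, p` be integers with `0 < a < p`. There exist integers `r, s` with
`gcd(r,s) = 1`, `p = r² + rs + s²`, and `a·s² ≡ r² (mod p)`, if and only if
`a² + a + 1 ≡ 0 (mod p)`. -/
theorem stmt_1 (a p : ℤ) (ha : 0 < a) (hap : a < p) :
    (∃ r s : ℤ, IsCoprime r s ∧ p = r ^ 2 + r * s + s ^ 2 ∧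
      a * s ^ 2 ≡ r ^ 2 [ZMOD p]) ↔ a ^ 2 + a + 1 ≡ 0 [ZMOD p] := by
  have hp0 : 0 < p := lt_trans ha hap
  constructor
  · rintro ⟨r, s, hco, hp, hmod⟩
    have hd : p ∣ r^2 - a*s^2 := Int.ModEq.dvd hmod
    obtain ⟨k, hk⟩ := hd
    have hdiv : p ∣ s^4 * (a^2+a+1) := by
      refine ⟨-k*(a*s^2 + r^2 + s^2) + (r^2 - r*s + s^2), ?_⟩
      linear_combination (-(a*s^2 + r^2 + s^2))*hk - (r^2 - r*s + s^2)*hp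
    have hps : IsCoprime p s := by
      have he : p = r*r + s*(r+s) := by rw [hp]; ring
      rw [he]
      exact (hco.mul_left hco).add_mul_left_left (r+s)
    have : p ∣ a^2 + a + 1 := (hps.pow_right (n := 4)).dvd_of_dvd_mul_left hdiv
    exact (Int.modEq_zero_iff_dvd).mpr this
  · intro h
    have hdvd : p ∣ a^2 + a + 1 := (Int.modEq_zero_iff_dvd).mp h
    obtain ⟨r, s, hco, hform, hmod⟩ :=
      key_aux p.natAbs p le_rfl hp0 (-1 - a)
        (by
          have he : (-1-a)^2 + (-1-a) + 1 = a^2+a+1 := by ring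
          rw [he]; exact hdvd)
    refine ⟨r, s, hco, hform, ?_⟩
    have hd : p ∣ (-1-a)*s - r := Int.ModEq.dvd hmod
    obtain ⟨k, hk⟩ := hd
    obtain ⟨m, hm⟩ := hdvd
    rw [Int.modEq_iff_dvd]
    refine ⟨s^2*m - k*((-1-a)*s + r), ?_⟩
    linear_combination (-((-1-a)*s + r))*hk + s^2*hm
end

section
/- Let r and s be coprime positive integers, set p = r² + r·s + s², and let a be an integer with 0 < a < p and a·s² ≡ r² (mod p). If 2a² ≡ −2(r + s) (mod p), then r = 1. -/
/-- Let `r, s` be coprime positive integers, `p = r² + rs + s²`, and `a` with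
`0 < a < p` and `a·s² ≡ r² (mod p)`. If `2a² ≡ −2(r+s) (mod p)`, then `r = 1`. -/
theorem stmt_3 (r s p a : ℤ) (hcop : IsCoprime r s) (hr : 0 < r) (hs : 0 < s)
    (hp : p = r ^ 2 + r * s + s ^ 2) (ha0 : 0 < a) (hap : a < p)
    (ha : a * s ^ 2 ≡ r ^ 2 [ZMOD p])
    (hsharp : 2 * a ^ 2 ≡ -2 * (r + s) [ZMOD p]) : r = 1 := by
  have h1 : p ∣ r ^ 2 - a * s ^ 2 := ha.dvd
  have h2 : p ∣ -2 * (r + s) - 2 * a ^ 2 := hsharp.dvd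
  obtain ⟨u, v, huv⟩ := hcop
  -- p is odd
  have hodd : Odd p := by
    rcases Int.even_or_odd r with ⟨x, hx⟩ | ⟨x, hx⟩ <;>
      rcases Int.even_or_odd s with ⟨y, hy⟩ | ⟨y, hy⟩
    · exfalso
      have h2r : (2 : ℤ) ∣ r := ⟨x, by omega⟩
      have h2s : (2 : ℤ) ∣ s := ⟨y, by omega⟩
      have : (2 : ℤ) ∣ 1 := by
        rw [← huv]
        exact dvd_add (Dvd.dvd.mul_left h2r u) (Dvd.dvd.mul_left h2s v)
      norm_num at this
    · exact ⟨2 * x ^ 2 + 2 * x * y + x + 2 * y ^ 2 + 2 * y,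
        by subst hp hx hy; ring⟩
    · exact ⟨2 * x ^ 2 + 2 * x + 2 * x * y + y + 2 * y ^ 2,
        by subst hp hx hy; ring⟩
    · exact ⟨2 * x ^ 2 + 2 * y ^ 2 + 2 * x * y + 3 * x + 3 * y + 1,
        by subst hp hx hy; ring⟩
  have hc2 : IsCoprime (2 : ℤ) p := by
    obtain ⟨k, hk⟩ := hodd
    exact ⟨-k, 1, by rw [hk]; ring⟩
  -- key divisibility
  have h3 : p ∣ 2 * (r ^ 4 + (r + s) * s ^ 4) := by
    have hd := dvd_sub ((h1.mul_right (r ^ 2 + a * s ^ 2)).mul_left 2) (h2.mul_left (s ^ 4))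
    have heq : 2 * (r ^ 4 + (r + s) * s ^ 4) =
        2 * ((r ^ 2 - a * s ^ 2) * (r ^ 2 + a * s ^ 2)) -
          s ^ 4 * (-2 * (r + s) - 2 * a ^ 2) := by ring
    rwa [heq]
  have h4 : p ∣ 2 * (r ^ 2 * (s * ((r + s) * (r - 1)))) := by
    have hid : 2 * (r ^ 2 * (s * ((r + s) * (r - 1)))) =
        2 * (r ^ 4 + (r + s) * s ^ 4) - p * (2 * (s ^ 3 - r ^ 2 * s + r ^ 2)) := by
      subst hp; ring
    rw [hid]
    exact dvd_sub h3 (Dvd.intro _ rfl)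
  have h5 : p ∣ r ^ 2 * (s * ((r + s) * (r - 1))) := (hc2.symm).dvd_of_dvd_mul_left h4
  -- coprimality facts
  have hpr : IsCoprime p r := by
    have hsr : IsCoprime (s ^ 2) r := IsCoprime.pow_left ⟨v, u, by linarith [huv]⟩
    have h := hsr.add_mul_left_left (r + s)
    have e : s ^ 2 + r * (r + s) = p := by rw [hp]; ring
    rwa [e] at h
  have hps : IsCoprime p s := by
    have hrs : IsCoprime (r ^ 2) s := IsCoprime.pow_left ⟨u, v, huv⟩
    have h := hrs.add_mul_left_left (r + s)
    have e : r ^ 2 + s * (r + s) = p := by rw [hp]; ring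
    rwa [e] at h
  have hprs : IsCoprime p (r + s) := by
    have hr1 : IsCoprime (r + s) r := ⟨v, u - v, by linear_combination huv⟩
    have hs1 : IsCoprime (r + s) s := ⟨u, v - u, by linear_combination huv⟩
    have hmul : IsCoprime (r + s) (r * s) := hr1.mul_right hs1
    have h := hmul.neg_right.symm.add_mul_left_left (r + s)
    have e : -(r * s) + (r + s) * (r + s) = p := by rw [hp]; ring
    rwa [e] at h
  have h6 : p ∣ s * ((r + s) * (r - 1)) := (hpr.pow_right).dvd_of_dvd_mul_left h5
  have h7 : p ∣ (r + s) * (r - 1) := hps.dvd_of_dvd_mul_left h6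
  have h8 : p ∣ r - 1 := hprs.dvd_of_dvd_mul_left h7
  -- size argument
  have hlt : r - 1 < p := by nlinarith
  have h0 : (0 : ℤ) ≤ r - 1 := by omega
  have : r - 1 = 0 := Int.eq_zero_of_abs_lt_dvd h8 (by rwa [abs_of_nonneg h0])
  omega
end

section
/- Let a and b be coprime positive integers, set n = b² − a·b − a², and suppose |n| ≠ 1. Then there exist coprime integers c and d with c > d > 0, c² + c·d − d² = |n|, and c·b ≡ a·d (mod n). -/
private theorem aux4 (a b n : ℤ) (hba : IsCoprime n (b - a)) (hZ : n ∣ b ^ 2 - a * b - a ^ 2)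
    (hn1 : |n| ≠ 1) :
    ∀ k : ℕ, ∀ p q : ℤ, q.toNat = k → 0 < p → 0 < q → IsCoprime p q →
      (q ^ 2 - p * q - p ^ 2 = n ∨ q ^ 2 - p * q - p ^ 2 = -n) → n ∣ p * b - a * q →
      ∃ c d : ℤ, IsCoprime c d ∧ d < c ∧ 0 < d ∧ c ^ 2 + c * d - d ^ 2 = |n| ∧
        n ∣ c * b - a * d := by
  intro k
  induction k using Nat.strong_induction_on with
  | _ k ih =>
    intro p q hk hp hq hcop hval hY
    rcases lt_trichotomy p q with h | h | h
    · -- recurse with (q - p, p)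
      have hnew : n ∣ (q - p) * b - a * p := by
        have hid : (b - a) * ((q - p) * b - a * p)
            = (q - p) * (b ^ 2 - a * b - a ^ 2) - a * (p * b - a * q) := by ring
        have hd : n ∣ (b - a) * ((q - p) * b - a * p) := by
          rw [hid]
          exact dvd_sub (Dvd.dvd.mul_left hZ _) (Dvd.dvd.mul_left hY _)
        exact hba.dvd_of_dvd_mul_left hd
      have hcop' : IsCoprime (q - p) p := by
        have := hcop.symm.add_mul_left_left (-1)
        simpa [sub_eq_add_neg, mul_comm] using this
      have hval' : p ^ 2 - (q - p) * p - (q - p) ^ 2 = n ∨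
          p ^ 2 - (q - p) * p - (q - p) ^ 2 = -n := by
        rcases hval with h1 | h1
        · right; rw [← h1]; ring
        · left
          have : p ^ 2 - (q - p) * p - (q - p) ^ 2 = -(q ^ 2 - p * q - p ^ 2) := by ring
          rw [this, h1, neg_neg]
      exact ih p.toNat (by omega) (q - p) p rfl (by omega) hp hcop' hval' hnew
    · -- p = q : contradiction with |n| ≠ 1
      exfalso
      subst h
      have hu : IsUnit p := isCoprime_self.mp hcop
      have hp1 : p = 1 := by
        rcases Int.isUnit_iff.mp hu with h1 | h1
        · exact h1
        · omega
      subst hp1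
      have hn' : n = -1 ∨ n = 1 := by
        rcases hval with h1 | h1
        · left; linarith [h1]
        · right; linarith [h1]
      rcases hn' with h1 | h1 <;> rw [h1] at hn1 <;> simp at hn1
    · -- p > q : done
      refine ⟨p, q, hcop, h, hq, ?_, hY⟩
      have hneg : q ^ 2 - p * q - p ^ 2 < 0 := by nlinarith
      rcases hval with h1 | h1
      · rw [abs_of_neg (by omega : n < 0)]; linarith
      · rw [abs_of_pos (by omega : 0 < n)]; linarith

/-- Let `a, b` be coprime positive integers, `n = b² − ab − a²`, `|n| ≠ 1`. Then
there exist coprime integers `c > d > 0` with `c² + cd − d² = |n|` and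
`c·b ≡ a·d (mod n)`. -/
theorem stmt_4 (a b n : ℤ) (hcop : IsCoprime a b) (ha : 0 < a) (hb : 0 < b)
    (hn : n = b ^ 2 - a * b - a ^ 2) (hn1 : |n| ≠ 1) :
    ∃ c d : ℤ, IsCoprime c d ∧ d < c ∧ 0 < d ∧ c ^ 2 + c * d - d ^ 2 = |n| ∧
      c * b ≡ a * d [ZMOD n] := by
  have hba : IsCoprime n (b - a) := by
    have h1 : IsCoprime (b - a) a := by
      have := hcop.symm.add_mul_left_left (-1)
      simpa [sub_eq_add_neg, mul_comm] using this
    have h2 : IsCoprime (b - a) (-(a ^ 2)) := by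
      have := (h1.mul_right h1).neg_right
      simpa [sq] using this
    have h3 : IsCoprime (b - a) (-(a ^ 2) + (b - a) * b) := h2.add_mul_left_right b
    have h4 : n = -(a ^ 2) + (b - a) * b := by rw [hn]; ring
    rw [h4]; exact h3.symm
  obtain ⟨c, d, h1, h2, h3, h4, h5⟩ :=
    aux4 a b n hba (hn ▸ dvd_refl n) hn1 b.toNat a b rfl ha hb hcop
      (Or.inl hn.symm) (by simp [mul_comm])
  refine ⟨c, d, h1, h2, h3, h4, ?_⟩
  exact (Int.ModEq.symm (Int.modEq_iff_dvd.mpr (by simpa using h5)))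
end

section
/- Define Γ : ℤ × ℤ → ℤ × ℤ by Γ(x,y) = (y − x, x), and for integers a, b let (aᵢ, bᵢ) = Γⁱ(a,b) (the i-th iterate applied to (a,b)). Then for every integer i ≥ 0, aᵢ = (−1)ⁱ·(F(i+1)·a − F(i)·b), where F denotes the Fibonacci sequence with F(0) = 0 and F(1) = 1. -/
/-- Define `Γ(x,y) = (y − x, x)` and let `(aᵢ, bᵢ) = Γⁱ(a,b)`. Then for every `i ≥ 0`,
`aᵢ = (−1)ⁱ·(F(i+1)·a − F(i)·b)` where `F` is the Fibonacci sequence with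
`F(0) = 0`, `F(1) = 1`. -/
theorem stmt_5 (Γ : ℤ × ℤ → ℤ × ℤ) (hΓ : ∀ x y : ℤ, Γ (x, y) = (y - x, x))
    (a b : ℤ) (i : ℕ) :
    (Γ^[i] (a, b)).1 = (-1) ^ i * ((Nat.fib (i + 1) : ℤ) * a - (Nat.fib i : ℤ) * b) := by
  set A : ℕ → ℤ := fun i => (-1) ^ i * ((Nat.fib (i + 1) : ℤ) * a - (Nat.fib i : ℤ) * b) with hA
  have key : ∀ i : ℕ, Γ^[i + 1] (a, b) = (A (i + 1), A i) := by
    intro i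
    induction i with
    | zero =>
      rw [Function.iterate_one, hΓ]
      simp only [hA, Prod.mk.injEq]
      norm_num [Nat.fib]
    | succ n ih =>
      rw [Function.iterate_succ_apply', ih, hΓ]
      have : A n - A (n + 1) = A (n + 2) := by
        simp only [hA]
        have h1 : (Nat.fib (n + 3) : ℤ) = Nat.fib (n + 1) + Nat.fib (n + 2) := by
          rw [Nat.fib_add_two]; push_cast; ring
        have h2 : (Nat.fib (n + 2) : ℤ) = Nat.fib n + Nat.fib (n + 1) := by
          rw [Nat.fib_add_two]; push_cast; ring
        rw [show n + 2 + 1 = n + 3 from rfl, h1, h2]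
        ring
      rw [this]
  cases i with
  | zero => simp [hA]
  | succ n => rw [key n]
end

section
/- Let c ∈ {1, 2}, let A, B, t be integers with A ≥ 2, B ≥ (c+1)·A − 1, and t ≤ −1, let δ ∈ {1, −1}, and set p = |c·A·B + t·B² + δ·A|. Then p ≥ |t+1|·B² + B − A. -/
/-- Let `c ∈ {1,2}`, `A ≥ 2`, `B ≥ (c+1)·A − 1`, `t ≤ −1`, `δ ∈ {1,−1}`, and
`p = |c·A·B + t·B² + δ·A|`. Then `p ≥ |t+1|·B² + B − A`. -/
theorem stmt_8 (c A B t δ p : ℤ) (hc : c = 1 ∨ c = 2) (hA : 2 ≤ A)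
    (hB : (c + 1) * A - 1 ≤ B) (ht : t ≤ -1) (hδ : δ = 1 ∨ δ = -1)
    (hp : p = |c * A * B + t * B ^ 2 + δ * A|) :
    |t + 1| * B ^ 2 + B - A ≤ p := by
  have hc1 : 1 ≤ c := by rcases hc with h | h <;> omega
  have hB3 : 3 ≤ B := by nlinarith
  have hkey : B ^ 2 ≥ c * A * B + A := by nlinarith
  have hE : c * A * B + t * B ^ 2 + δ * A ≤ 0 := by
    rcases hδ with h | h <;> subst h <;> nlinarith
  have ht1 : |t + 1| = -(t + 1) := abs_of_nonpos (by omega)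
  rw [hp, abs_of_nonpos hE, ht1]
  rcases hδ with h | h <;> subst h <;> nlinarith
end

section
/- Let r and s be coprime integers with r > s > 0, and let m be an integer with (m−1)·s < r < m·s. Then 0 < (2m−1)·r·s − m·(m−1)·s² − r² + s² − 2s < r² + r·s − s² − 2. -/
/-- Let `r, s` be coprime integers with `r > s > 0`, and `m` with
`(m−1)s < r < ms`. Then `0 < (2m−1)rs − m(m−1)s² − r² + s² − 2s < r² + rs − s² − 2`. -/
theorem stmt_11 (r s m : ℤ) (hcop : IsCoprime r s) (hrs : s < r) (hs : 0 < s)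
    (hm1 : (m - 1) * s < r) (hm2 : r < m * s) :
    0 < (2 * m - 1) * r * s - m * (m - 1) * s ^ 2 - r ^ 2 + s ^ 2 - 2 * s ∧
      (2 * m - 1) * r * s - m * (m - 1) * s ^ 2 - r ^ 2 + s ^ 2 - 2 * s <
        r ^ 2 + r * s - s ^ 2 - 2 := by
  have ha : 1 ≤ r - (m - 1) * s := by linarith
  have hb : 1 ≤ m * s - r := by linarith
  have hm : 2 ≤ m := by nlinarith
  have hr : s + (r - (m - 1) * s) ≤ r := by nlinarith
  constructor
  · nlinarith [mul_le_mul ha hb (by linarith) (by linarith : (0:ℤ) ≤ r - (m-1)*s)]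
  · nlinarith [mul_pos (by linarith : (0:ℤ) < r - (m-1)*s) (by linarith : (0:ℤ) < m*s - r),
      sq_nonneg (r - (m-1)*s), mul_pos hs (by linarith : (0:ℤ) < r - (m-1)*s)]
end

section
/- Let A, B, p be integers with A ≥ 2, let a ∈ {0, 1} and δ ∈ {1, −1}, and suppose B ≥ (3−a)·A − 1 and p ≥ B² + B − A. Then (1 − δ·a)·B + δ·A ≢ 1 (mod p). -/
/-- Let `A ≥ 2`, `a ∈ {0,1}`, `δ ∈ {1,−1}`, `B ≥ (3−a)·A − 1`, and `p ≥ B² + B − A`.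
Then `(1 − δ·a)·B + δ·A ≢ 1 (mod p)`. -/
theorem stmt_12 (A B p a δ : ℤ) (hA : 2 ≤ A) (ha : a = 0 ∨ a = 1)
    (hδ : δ = 1 ∨ δ = -1) (hB : (3 - a) * A - 1 ≤ B) (hp : B ^ 2 + B - A ≤ p) :
    ¬ ((1 - δ * a) * B + δ * A ≡ 1 [ZMOD p]) := by
  rcases ha with rfl | rfl <;> rcases hδ with rfl | rfl <;> intro h <;>
    have hd := h.symm.dvd <;>
    · have hle := Int.le_of_dvd (by nlinarith) hd
      nlinarith
end

section
/- Let A, B, p be integers with A ≥ 2, let a ∈ {0, 1} and δ ∈ {1, −1}, and suppose B ≥ (3−a)·A − 1, B ≥ 2·A + 1, and p ≥ B² + B − A. Then 2·δ·A·B + (1 − δ·a)·B − δ·A ≢ 1 (mod p). -/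
/-- Let `A ≥ 2`, `a ∈ {0,1}`, `δ ∈ {1,−1}`, `B ≥ (3−a)·A − 1`, `B ≥ 2A + 1`, and
`p ≥ B² + B − A`. Then `2·δ·A·B + (1 − δ·a)·B − δ·A ≢ 1 (mod p)`. -/
theorem stmt_13 (A B p a δ : ℤ) (hA : 2 ≤ A) (ha : a = 0 ∨ a = 1)
    (hδ : δ = 1 ∨ δ = -1) (hB : (3 - a) * A - 1 ≤ B) (hB' : 2 * A + 1 ≤ B)
    (hp : B ^ 2 + B - A ≤ p) :
    ¬ (2 * δ * A * B + (1 - δ * a) * B - δ * A ≡ 1 [ZMOD p]) := by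
  intro h
  have hd : p ∣ 1 - (2 * δ * A * B + (1 - δ * a) * B - δ * A) := h.dvd
  have habs : |1 - (2 * δ * A * B + (1 - δ * a) * B - δ * A)| < p := by
    rw [abs_lt]
    rcases ha with rfl | rfl <;> rcases hδ with rfl | rfl <;>
      constructor <;> nlinarith [sq_nonneg B, sq_nonneg (B - 2 * A)]
  have h0 := Int.eq_zero_of_abs_lt_dvd hd habs
  rcases ha with rfl | rfl <;> rcases hδ with rfl | rfl <;> nlinarith
end

section
/- Let j be an integer with j ≥ 1 or j ≤ −2, let ε ∈ {1, −1}, and set p = 22j² + 9j + 1, a = ε·(11j + 2), and X = 22j² − 1 if j ≥ 1, X = 22j² + 18j + 3 if j ≤ −2. Then 1 − a − a² ≢ X·a (mod p). -/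
/-- Type IX Berge knots: for `j ≥ 1` or `j ≤ −2`, `ε ∈ {1,−1}`, `p = 22j² + 9j + 1`,
`a = ε·(11j + 2)`, and `X = 22j² − 1` if `j ≥ 1`, `X = 22j² + 18j + 3` if `j ≤ −2`,
we have `1 − a − a² ≢ X·a (mod p)`. -/
theorem stmt_14 (j ε p a X : ℤ) (hj : 1 ≤ j ∨ j ≤ -2) (hε : ε = 1 ∨ ε = -1)
    (hp : p = 22 * j ^ 2 + 9 * j + 1) (ha : a = ε * (11 * j + 2))
    (hX1 : 1 ≤ j → X = 22 * j ^ 2 - 1) (hX2 : j ≤ -2 → X = 22 * j ^ 2 + 18 * j + 3) :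
    ¬ (1 - a - a ^ 2 ≡ X * a [ZMOD p]) := by
  intro h
  have hd : p ∣ X * a - (1 - a - a ^ 2) := h.dvd
  rcases hj with hj | hj
  · have hX := hX1 hj
    rcases hε with hε | hε
    · have heq : X * a - (1 - a - a ^ 2) = p * (11 * j + 3) + 6 * j := by
        subst hp ha hX hε; ring
      have h6 : p ∣ 6 * j :=
        (dvd_add_right (dvd_mul_right p _)).mp (heq ▸ hd)
      have hle := Int.le_of_dvd (by linarith) h6
      nlinarith
    · have heq : X * a - (1 - a - a ^ 2) = p * (8 - 11 * j) - (17 * j + 5) := by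
        subst hp ha hX hε; ring
      have h6 : p ∣ 17 * j + 5 :=
        (dvd_sub_right (dvd_mul_right p _)).mp (heq ▸ hd)
      have hle := Int.le_of_dvd (by linarith) h6
      nlinarith
  · have hX := hX2 hj
    rcases hε with hε | hε
    · have heq : X * a - (1 - a - a ^ 2) = p * (11 * j + 12) - (1 - 5 * j) := by
        subst hp ha hX hε; ring
      have h6 : p ∣ 1 - 5 * j :=
        (dvd_sub_right (dvd_mul_right p _)).mp (heq ▸ hd)
      have hle := Int.le_of_dvd (by linarith) h6
      nlinarith
    · have heq : X * a - (1 - a - a ^ 2) = p * (-(11 * j) - 1) + (-16 * j - 4) := by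
        subst hp ha hX hε; ring
      have h6 : p ∣ -16 * j - 4 :=
        (dvd_add_right (dvd_mul_right p _)).mp (heq ▸ hd)
      have hle := Int.le_of_dvd (by linarith) h6
      nlinarith
end

section
/- Let j be an integer with j ≥ 1 or j ≤ −2, let ε ∈ {1, −1}, and set p = 22j² + 13j + 2, a = ε·(11j + 3), and X = 22j² + 4j − 1 if j ≥ 1, X = 22j² + 22j + 5 if j ≤ −2. Then 1 − a − a² ≢ X·a (mod p). -/
/-- Type X Berge knots: for `j ≥ 1` or `j ≤ −2`, `ε ∈ {1,−1}`, `p = 22j² + 13j + 2`,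
`a = ε·(11j + 3)`, and `X = 22j² + 4j − 1` if `j ≥ 1`, `X = 22j² + 22j + 5` if `j ≤ −2`,
we have `1 − a − a² ≢ X·a (mod p)`. -/
theorem stmt_15 (j ε p a X : ℤ) (hj : 1 ≤ j ∨ j ≤ -2) (hε : ε = 1 ∨ ε = -1)
    (hp : p = 22 * j ^ 2 + 13 * j + 2) (ha : a = ε * (11 * j + 3))
    (hX1 : 1 ≤ j → X = 22 * j ^ 2 + 4 * j - 1)
    (hX2 : j ≤ -2 → X = 22 * j ^ 2 + 22 * j + 5) :
    ¬ (1 - a - a ^ 2 ≡ X * a [ZMOD p]) := by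
  intro h
  rcases hj with hj | hj <;> rcases hε with hε | hε
  · -- j ≥ 1, ε = 1 : residue 4j
    have hX := hX1 hj
    have hd : p ∣ (X * a - (1 - a - a ^ 2)) := h.dvd
    have h2 : p ∣ (X * a - (1 - a - a ^ 2) - p * (11 * j + 4)) :=
      hd.sub (Dvd.intro _ rfl)
    have h3 : X * a - (1 - a - a ^ 2) - p * (11 * j + 4) = 4 * j := by
      subst hX hε ha hp; ring
    rw [h3] at h2
    have h4 := Int.le_of_dvd (by linarith) h2
    nlinarith
  · -- j ≥ 1, ε = -1 : residue 15j+6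
    have hX := hX1 hj
    have hd : p ∣ ((1 - a - a ^ 2) - X * a) := h.symm.dvd
    have h2 : p ∣ ((1 - a - a ^ 2) - X * a - p * (11 * j - 7)) :=
      hd.sub (Dvd.intro _ rfl)
    have h3 : (1 - a - a ^ 2) - X * a - p * (11 * j - 7) = 15 * j + 6 := by
      subst hX hε ha hp; ring
    rw [h3] at h2
    have h4 := Int.le_of_dvd (by linarith) h2
    nlinarith
  · -- j ≤ -2, ε = 1 : residue -7j
    have hX := hX2 hj
    have hd : p ∣ ((1 - a - a ^ 2) - X * a) := h.symm.dvd
    have h2 : p ∣ ((1 - a - a ^ 2) - X * a - p * (-11 * j - 13)) :=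
      hd.sub (Dvd.intro _ rfl)
    have h3 : (1 - a - a ^ 2) - X * a - p * (-11 * j - 13) = -7 * j := by
      subst hX hε ha hp; ring
    rw [h3] at h2
    have h4 := Int.le_of_dvd (by linarith) h2
    nlinarith
  · -- j ≤ -2, ε = -1 : residue -18j-6
    have hX := hX2 hj
    have hd : p ∣ (X * a - (1 - a - a ^ 2)) := h.dvd
    have h2 : p ∣ (X * a - (1 - a - a ^ 2) - p * (-11 * j - 2)) :=
      hd.sub (Dvd.intro _ rfl)
    have h3 : X * a - (1 - a - a ^ 2) - p * (-11 * j - 2) = -18 * j - 6 := by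
      subst hX hε ha hp; ring
    rw [h3] at h2
    have h4 := Int.le_of_dvd (by linarith) h2
    nlinarith
end

section
/- Let i and k be coprime integers with 2 ≤ i < k. If 2k + 2i ≡ 0 (mod i·k + 1), then i = 3 and k = 5. -/
/-- Let `i, k` be coprime integers with `2 ≤ i < k`. If `2k + 2i ≡ 0 (mod ik + 1)`,
then `i = 3` and `k = 5`. -/
theorem stmt_17 (i k : ℤ) (hcop : IsCoprime i k) (hi : 2 ≤ i) (hik : i < k)
    (h : 2 * k + 2 * i ≡ 0 [ZMOD i * k + 1]) : i = 3 ∧ k = 5 := by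
  have hd : i * k + 1 ∣ 2 * k + 2 * i := by
    have h' := h.dvd
    simpa using (dvd_neg.mpr h')
  have hpos : (0 : ℤ) < 2 * k + 2 * i := by linarith
  have hle : i * k + 1 ≤ 2 * k + 2 * i := Int.le_of_dvd hpos hd
  have hi3 : i ≤ 3 := by nlinarith
  interval_cases i
  · -- i = 2
    exfalso
    have h3 : (2 * k + 1 : ℤ) ∣ 3 := by
      have h' := hd.sub (dvd_refl (2 * k + 1))
      rw [show (3 : ℤ) = 2 * k + 2 * 2 - (2 * k + 1) by ring]; exact h'
    have := Int.le_of_dvd (by norm_num) h3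
    linarith
  · -- i = 3
    have h16 : (3 * k + 1 : ℤ) ∣ 16 := by
      have h' := (hd.mul_left 3).sub ((dvd_refl (3 * k + 1)).mul_left 2)
      rw [show (16 : ℤ) = 3 * (2 * k + 2 * 3) - 2 * (3 * k + 1) by ring]; exact h'
    have hk5 : k ≤ 5 := by
      have := Int.le_of_dvd (by norm_num) h16
      linarith
    interval_cases k
    · exfalso
      norm_num at hd
    · exact ⟨rfl, rfl⟩
end
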